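/- Let a, b, τ > 0, s ∈ ℝ, and σ > 0. For y ∈ ℝ and j ∈ {0, 1}, define I_j(y) = ∫₀¹ κ^{a−1/2+j} (1−κ)^{b−1} {1/τ² + (1 − 1/τ²)κ}^{−1} exp{−κ(s + y²/(2σ²))} dκ. Then lim_{y→∞} y · I₁(y)/I₀(y) = 0; consequently the posterior mean E(β | y) = (1 − I₁(y)/I₀(y)) · y under the hypergeometric-beta normal scale mixture is tail-robust: E(β | y) − y → 0 as y → ∞. -/

import Mathlib

open MeasureTheory Set Filter

/-- The posterior integral
`I_j(y) = ∫₀¹ κ^{a−1/2+j} (1−κ)^{b−1} {1/τ² + (1 − 1/τ²)κ}^{−1} exp{−κ(s + y²/(2σ²))} dκ`. -/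
noncomputable def postInt (a b τ s σ : ℝ) (j : ℝ) (y : ℝ) : ℝ :=
  ∫ κ in Set.Ioo (0 : ℝ) 1,
    κ ^ (a - 1 / 2 + j) * (1 - κ) ^ (b - 1) * (1 / τ ^ 2 + (1 - 1 / τ ^ 2) * κ)⁻¹ *
      Real.exp (-(κ * (s + y ^ 2 / (2 * σ ^ 2))))

namespace HBaux

lemma dd_lower {τ : ℝ} (hτ : 0 < τ) {κ : ℝ} (h0 : 0 ≤ κ) (h1 : κ ≤ 1) :
    min (1 / τ ^ 2) 1 ≤ 1 / τ ^ 2 + (1 - 1 / τ ^ 2) * κ := by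
  rcases le_total (1 / τ ^ 2) 1 with h | h
  · rw [min_eq_left h]
    nlinarith [mul_nonneg (by linarith : (0:ℝ) ≤ 1 - 1 / τ ^ 2) h0]
  · rw [min_eq_right h]
    nlinarith [mul_nonneg (by linarith : (0:ℝ) ≤ 1 / τ ^ 2 - 1) (by linarith : (0:ℝ) ≤ 1 - κ)]

lemma dd_upper {τ : ℝ} (hτ : 0 < τ) {κ : ℝ} (h0 : 0 ≤ κ) (h1 : κ ≤ 1) :
    1 / τ ^ 2 + (1 - 1 / τ ^ 2) * κ ≤ max (1 / τ ^ 2) 1 := by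
  rcases le_total (1 / τ ^ 2) 1 with h | h
  · rw [max_eq_right h]
    nlinarith [mul_nonneg (by linarith : (0:ℝ) ≤ 1 - 1 / τ ^ 2) (by linarith : (0:ℝ) ≤ 1 - κ)]
  · rw [max_eq_left h]
    nlinarith [mul_nonneg (by linarith : (0:ℝ) ≤ 1 / τ ^ 2 - 1) h0]

lemma min_pos {τ : ℝ} (hτ : 0 < τ) : 0 < min (1 / τ ^ 2) 1 :=
  lt_min (by positivity) one_pos

lemma dd_pos {τ : ℝ} (hτ : 0 < τ) {κ : ℝ} (h0 : 0 ≤ κ) (h1 : κ ≤ 1) :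
    0 < 1 / τ ^ 2 + (1 - 1 / τ ^ 2) * κ :=
  lt_of_lt_of_le (min_pos hτ) (dd_lower hτ h0 h1)

/-- the general kernel -/
noncomputable def ker (q b τ t κ : ℝ) : ℝ :=
  κ ^ q * (1 - κ) ^ (b - 1) * (1 / τ ^ 2 + (1 - 1 / τ ^ 2) * κ)⁻¹ * Real.exp (-(κ * t))

lemma ker_meas (q b τ t : ℝ) : Measurable (ker q b τ t) := by
  unfold ker
  fun_prop

lemma ker_pos {q b τ t : ℝ} (hτ : 0 < τ) {κ : ℝ} (h0 : 0 < κ) (h1 : κ < 1) :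
    0 < ker q b τ t κ := by
  unfold ker
  exact mul_pos (mul_pos (mul_pos (Real.rpow_pos_of_pos h0 q)
    (Real.rpow_pos_of_pos (by linarith) (b-1))) (inv_pos.mpr (dd_pos hτ h0.le h1.le)))
    (Real.exp_pos _)


lemma integrableOn_base {q b : ℝ} (hq : -1 < q) (hb : 0 < b) :
    IntegrableOn (fun κ : ℝ => κ ^ q * (1 - κ) ^ (b - 1)) (Ioo (0:ℝ) 1) := by
  have hmeas : Measurable (fun κ : ℝ => κ ^ q * (1 - κ) ^ (b - 1)) := by fun_prop
  have h1 : IntegrableOn (fun κ : ℝ => κ ^ q * (1 - κ) ^ (b - 1)) (Ioc (0:ℝ) (1/2)) := by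
    set C : ℝ := max ((1/2 : ℝ) ^ (b - 1)) 1 with hC
    have hint : IntegrableOn (fun κ : ℝ => C * κ ^ q) (Ioc (0:ℝ) (1/2)) :=
      ((intervalIntegral.intervalIntegrable_rpow' (a:=0) (b:=1/2) hq).1).const_mul C
    refine Integrable.mono' hint (hmeas.aestronglyMeasurable) ?_
    rw [ae_restrict_iff' measurableSet_Ioc]
    refine Filter.Eventually.of_forall (fun κ hκ => ?_)
    have h0 : 0 < κ := hκ.1
    have h2 : κ ≤ 1/2 := hκ.2
    have hb1 : (0:ℝ) ≤ (1 - κ) ^ (b - 1) := Real.rpow_nonneg (by linarith) _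
    have hq1 : (0:ℝ) ≤ κ ^ q := Real.rpow_nonneg h0.le _
    rw [Real.norm_eq_abs, abs_of_nonneg (mul_nonneg hq1 hb1)]
    have hbound : (1 - κ) ^ (b - 1) ≤ C := by
      rcases le_total b 1 with hb' | hb'
      · exact le_max_of_le_left
          (Real.rpow_le_rpow_of_nonpos (by norm_num) (by linarith) (by linarith))
      · exact le_max_of_le_right (Real.rpow_le_one (by linarith) (by linarith) (by linarith))
    calc κ ^ q * (1 - κ) ^ (b - 1) ≤ κ ^ q * C := by
          exact mul_le_mul_of_nonneg_left hbound hq1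
      _ = C * κ ^ q := by ring
  have h2 : IntegrableOn (fun κ : ℝ => κ ^ q * (1 - κ) ^ (b - 1)) (Ioo (1/2 : ℝ) 1) := by
    set C : ℝ := max ((1/2 : ℝ) ^ q) 1 with hC
    have hint0 : IntervalIntegrable (fun x : ℝ => (1 - x) ^ (b - 1)) volume (1 - 0) (1 - 1/2) :=
      (intervalIntegral.intervalIntegrable_rpow' (a:=0) (b:=1/2) (by linarith : (-1:ℝ) < b - 1)).comp_sub_left 1
    have hint : IntegrableOn (fun κ : ℝ => C * (1 - κ) ^ (b - 1)) (Ioo (1/2 : ℝ) 1) := by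
      have := (hint0.symm).1
      norm_num at this
      exact (this.mono_set Ioo_subset_Ioc_self).const_mul C
    refine Integrable.mono' hint (hmeas.aestronglyMeasurable) ?_
    rw [ae_restrict_iff' measurableSet_Ioo]
    refine Filter.Eventually.of_forall (fun κ hκ => ?_)
    have h0 : (1/2 : ℝ) < κ := hκ.1
    have h2 : κ < 1 := hκ.2
    have hb1 : (0:ℝ) ≤ (1 - κ) ^ (b - 1) := Real.rpow_nonneg (by linarith) _
    have hq1 : (0:ℝ) ≤ κ ^ q := Real.rpow_nonneg (by linarith) _
    rw [Real.norm_eq_abs, abs_of_nonneg (mul_nonneg hq1 hb1)]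
    have hbound : κ ^ q ≤ C := by
      rcases le_total q 0 with hq' | hq'
      · exact le_max_of_le_left
          (Real.rpow_le_rpow_of_nonpos (by norm_num) h0.le hq')
      · exact le_max_of_le_right (Real.rpow_le_one (by linarith) h2.le hq')
    exact mul_le_mul_of_nonneg_right hbound hb1
  have := h1.union h2
  rwa [Ioc_union_Ioo_eq_Ioo (by norm_num) (by norm_num)] at this




lemma integrableOn_ker {q b τ : ℝ} (hq : -1 < q) (hb : 0 < b) (hτ : 0 < τ) (t : ℝ) :
    IntegrableOn (ker q b τ t) (Ioo (0:ℝ) 1) := by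
  have hmeas : Measurable (ker q b τ t) := by unfold ker; fun_prop
  refine Integrable.mono' (((integrableOn_base hq hb)).const_mul
      ((min (1 / τ ^ 2) 1)⁻¹ * Real.exp |t|)) (hmeas.aestronglyMeasurable) ?_
  rw [ae_restrict_iff' measurableSet_Ioo]
  refine Filter.Eventually.of_forall (fun κ hκ => ?_)
  obtain ⟨h0, h1⟩ := hκ
  have hdd := dd_pos hτ h0.le h1.le
  have hA : (0:ℝ) ≤ κ ^ q * (1 - κ) ^ (b - 1) :=
    mul_nonneg (Real.rpow_nonneg h0.le _) (Real.rpow_nonneg (by linarith) _)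
  have hker_nonneg : 0 ≤ ker q b τ t κ := by
    unfold ker
    positivity
  rw [Real.norm_eq_abs, abs_of_nonneg hker_nonneg]
  have e1 : (1 / τ ^ 2 + (1 - 1 / τ ^ 2) * κ)⁻¹ ≤ (min (1 / τ ^ 2) 1)⁻¹ :=
    inv_anti₀ (min_pos hτ) (dd_lower hτ h0.le h1.le)
  have e2 : Real.exp (-(κ * t)) ≤ Real.exp |t| := by
    refine Real.exp_le_exp.mpr ?_
    have : -(κ * t) = κ * (-t) := by ring
    rw [this]
    calc κ * (-t) ≤ κ * |t| := mul_le_mul_of_nonneg_left (neg_le_abs t) h0.le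
      _ ≤ 1 * |t| := mul_le_mul_of_nonneg_right h1.le (abs_nonneg t)
      _ = |t| := one_mul _
  calc ker q b τ t κ
      = (κ ^ q * (1 - κ) ^ (b - 1)) *
        ((1 / τ ^ 2 + (1 - 1 / τ ^ 2) * κ)⁻¹ * Real.exp (-(κ * t))) := by unfold ker; ring
    _ ≤ (κ ^ q * (1 - κ) ^ (b - 1)) * ((min (1 / τ ^ 2) 1)⁻¹ * Real.exp |t|) := by
        refine mul_le_mul_of_nonneg_left ?_ hA
        exact mul_le_mul e1 e2 (Real.exp_pos _).le (by positivity)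
    _ = (min (1 / τ ^ 2) 1)⁻¹ * Real.exp |t| * (κ ^ q * (1 - κ) ^ (b - 1)) := by ring




lemma ker_nonneg_on {q b τ t : ℝ} (hτ : 0 < τ) :
    ∀ᵐ κ ∂(volume.restrict (Ioo (0:ℝ) 1)), 0 ≤ ker q b τ t κ := by
  rw [ae_restrict_iff' measurableSet_Ioo]
  exact Filter.Eventually.of_forall fun κ hκ => (ker_pos hτ hκ.1 hκ.2).le

/-- Upper bound for I₁. -/
lemma I1_le {a b τ : ℝ} (ha : 0 < a) (hb : 0 < b) (hτ : 0 < τ) {δ t : ℝ}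
    (hδ0 : 0 < δ) (hδ : δ ≤ 1/2) (ht : 0 ≤ t) :
    (∫ κ in Ioo (0:ℝ) 1, ker (a - 1/2 + 1) b τ t κ) ≤
      δ * (∫ κ in Ioo (0:ℝ) 1, ker (a - 1/2) b τ t κ) +
        Real.exp (-(δ * t)) * (∫ κ in Ioo (0:ℝ) 1, ker (a - 1/2) b τ 0 κ) := by
  have hq0 : (-1:ℝ) < a - 1/2 := by linarith
  have hq1 : (-1:ℝ) < a - 1/2 + 1 := by linarith
  have hsub1 : Ioc (0:ℝ) δ ⊆ Ioo (0:ℝ) 1 := fun x hx => ⟨hx.1, lt_of_le_of_lt hx.2 (by linarith)⟩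
  have hsub2 : Ioo (δ:ℝ) 1 ⊆ Ioo (0:ℝ) 1 := fun x hx => ⟨lt_trans hδ0 hx.1, hx.2⟩
  have hsplit : Ioo (0:ℝ) 1 = Ioc 0 δ ∪ Ioo δ 1 :=
    (Ioc_union_Ioo_eq_Ioo hδ0.le (by linarith)).symm
  have hdisj : Disjoint (Ioc (0:ℝ) δ) (Ioo δ 1) :=
    Set.disjoint_left.mpr fun x hx hx' => absurd hx.2 (not_le.mpr hx'.1)
  have part1 : (∫ κ in Ioc (0:ℝ) δ, ker (a - 1/2 + 1) b τ t κ) ≤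
      δ * (∫ κ in Ioo (0:ℝ) 1, ker (a - 1/2) b τ t κ) := by
      have step1 : (∫ κ in Ioc (0:ℝ) δ, ker (a - 1/2 + 1) b τ t κ) ≤
          ∫ κ in Ioc (0:ℝ) δ, δ * ker (a - 1/2) b τ t κ := by
        refine setIntegral_mono_on ((integrableOn_ker hq1 hb hτ t).mono_set hsub1)
          (((integrableOn_ker hq0 hb hτ t).mono_set hsub1).const_mul δ)
          measurableSet_Ioc (fun κ hκ => ?_)
        have h0 : 0 < κ := hκ.1
        have e : ker (a - 1/2 + 1) b τ t κ = κ * ker (a - 1/2) b τ t κ := by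
          unfold ker
          rw [Real.rpow_add h0, Real.rpow_one]
          ring
        rw [e]
        exact mul_le_mul_of_nonneg_right hκ.2
          (ker_pos hτ h0 ((hsub1 hκ).2)).le
      refine le_trans step1 ?_
      rw [integral_const_mul]
      refine mul_le_mul_of_nonneg_left ?_ hδ0.le
      refine setIntegral_mono_set (integrableOn_ker hq0 hb hτ t) (ker_nonneg_on hτ) ?_
      exact HasSubset.Subset.eventuallyLE hsub1
  have part2 : (∫ κ in Ioo (δ:ℝ) 1, ker (a - 1/2 + 1) b τ t κ) ≤
      Real.exp (-(δ * t)) * (∫ κ in Ioo (0:ℝ) 1, ker (a - 1/2) b τ 0 κ) := by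
      have step1 : (∫ κ in Ioo (δ:ℝ) 1, ker (a - 1/2 + 1) b τ t κ) ≤
          ∫ κ in Ioo (δ:ℝ) 1, Real.exp (-(δ * t)) * ker (a - 1/2) b τ 0 κ := by
        refine setIntegral_mono_on ((integrableOn_ker hq1 hb hτ t).mono_set hsub2)
          (((integrableOn_ker hq0 hb hτ 0).mono_set hsub2).const_mul _)
          measurableSet_Ioo (fun κ hκ => ?_)
        have h0 : 0 < κ := lt_trans hδ0 hκ.1
        have h1 : κ < 1 := hκ.2
        have hdd := dd_pos hτ h0.le h1.le
        have hexp : Real.exp (-(κ * t)) ≤ Real.exp (-(δ * t)) :=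
          Real.exp_le_exp.mpr (neg_le_neg (mul_le_mul_of_nonneg_right hκ.1.le ht))
        have hpow : κ ^ (a - 1/2 + 1) ≤ κ ^ (a - 1/2) :=
          Real.rpow_le_rpow_of_exponent_ge h0 h1.le (by linarith)
        have e : Real.exp (-(δ * t)) * ker (a - 1/2) b τ 0 κ =
            κ ^ (a - 1/2) * (1 - κ) ^ (b - 1) *
              (1 / τ ^ 2 + (1 - 1 / τ ^ 2) * κ)⁻¹ * Real.exp (-(δ * t)) := by
          unfold ker
          rw [mul_zero, neg_zero, Real.exp_zero]
          ring
        rw [e]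
        unfold ker
        have hb1 : (0:ℝ) ≤ (1 - κ) ^ (b - 1) := Real.rpow_nonneg (by linarith) _
        calc κ ^ (a - 1/2 + 1) * (1 - κ) ^ (b - 1) *
              (1 / τ ^ 2 + (1 - 1 / τ ^ 2) * κ)⁻¹ * Real.exp (-(κ * t))
            ≤ κ ^ (a - 1/2) * (1 - κ) ^ (b - 1) *
              (1 / τ ^ 2 + (1 - 1 / τ ^ 2) * κ)⁻¹ * Real.exp (-(δ * t)) := by
              gcongr
          _ = _ := rfl
      refine le_trans step1 ?_
      rw [integral_const_mul]
      refine mul_le_mul_of_nonneg_left ?_ (Real.exp_pos _).le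
      refine setIntegral_mono_set (integrableOn_ker hq0 hb hτ 0) (ker_nonneg_on hτ) ?_
      exact HasSubset.Subset.eventuallyLE hsub2
  rw [hsplit, setIntegral_union hdisj measurableSet_Ioo
    ((integrableOn_ker hq1 hb hτ t).mono_set hsub1)
    ((integrableOn_ker hq1 hb hτ t).mono_set hsub2)]
  rw [← hsplit]
  exact add_le_add part1 part2


/-- Lower bound for I₀. -/
lemma I0_ge {a b τ : ℝ} (ha : 0 < a) (hb : 0 < b) (hτ : 0 < τ) {δ t : ℝ}
    (hδ0 : 0 < δ) (hδ : δ ≤ 1/2) (ht : 0 ≤ t) :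
    (min ((1/2 : ℝ) ^ (b - 1)) 1 * (max (1 / τ ^ 2) 1)⁻¹) * Real.exp (-(δ * t) / 2) *
        ((δ / 2) ^ (a - 1/2 + 1) / (a - 1/2 + 1)) ≤
      ∫ κ in Ioo (0:ℝ) 1, ker (a - 1/2) b τ t κ := by
  have hq0 : (-1:ℝ) < a - 1/2 := by linarith
  have hsub : Ioo (0:ℝ) (δ/2) ⊆ Ioo (0:ℝ) 1 := fun x hx => ⟨hx.1, by linarith [hx.2]⟩
  set m : ℝ := min ((1/2 : ℝ) ^ (b - 1)) 1 * (max (1 / τ ^ 2) 1)⁻¹ with hm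
  have hmax : (0:ℝ) < max (1 / τ ^ 2) 1 := lt_max_of_lt_right one_pos
  have hmpos : 0 < m := by
    apply mul_pos (lt_min (Real.rpow_pos_of_pos (by norm_num) _) one_pos)
    exact inv_pos.mpr hmax
  have step2 : (∫ κ in Ioo (0:ℝ) (δ/2), (m * Real.exp (-(δ * t) / 2)) * κ ^ (a - 1/2)) ≤
      ∫ κ in Ioo (0:ℝ) (δ/2), ker (a - 1/2) b τ t κ := by
    refine setIntegral_mono_on
      ((((intervalIntegral.intervalIntegrable_rpow' (a := 0) (b := δ/2) hq0).1).mono_set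
        Ioo_subset_Ioc_self).const_mul _)
      ((integrableOn_ker hq0 hb hτ t).mono_set hsub)
      measurableSet_Ioo (fun κ hκ => ?_)
    have h0 : 0 < κ := hκ.1
    have h2 : κ < δ/2 := hκ.2
    have h1 : κ < 1 := by linarith
    have hhalf : κ ≤ 1/2 := by linarith
    have hbnd : min ((1/2 : ℝ) ^ (b - 1)) 1 ≤ (1 - κ) ^ (b - 1) := by
      rcases le_total b 1 with hb' | hb'
      · refine le_trans (min_le_right _ _) ?_
        have := Real.rpow_le_rpow_of_nonpos (x := 1 - κ) (y := 1) (z := b - 1)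
          (by linarith) (by linarith) (by linarith)
        simpa using this
      · exact le_trans (min_le_left _ _)
          (Real.rpow_le_rpow (by norm_num) (by linarith) (by linarith))
    have hdinv : (max (1 / τ ^ 2) 1)⁻¹ ≤ (1 / τ ^ 2 + (1 - 1 / τ ^ 2) * κ)⁻¹ :=
      inv_anti₀ (dd_pos hτ h0.le h1.le) (dd_upper hτ h0.le h1.le)
    have hexp : Real.exp (-(δ * t) / 2) ≤ Real.exp (-(κ * t)) := by
      refine Real.exp_le_exp.mpr ?_
      have : κ * t ≤ δ / 2 * t := mul_le_mul_of_nonneg_right h2.le ht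
      linarith
    unfold ker
    have hκpow : (0:ℝ) ≤ κ ^ (a - 1/2) := Real.rpow_nonneg h0.le _
    calc m * Real.exp (-(δ * t) / 2) * κ ^ (a - 1/2)
        = κ ^ (a - 1/2) * min ((1/2 : ℝ) ^ (b - 1)) 1 * (max (1 / τ ^ 2) 1)⁻¹ *
            Real.exp (-(δ * t) / 2) := by rw [hm]; ring
      _ ≤ κ ^ (a - 1/2) * (1 - κ) ^ (b - 1) *
            (1 / τ ^ 2 + (1 - 1 / τ ^ 2) * κ)⁻¹ * Real.exp (-(κ * t)) := by
          have t1 : κ ^ (a - 1/2) * min ((1/2 : ℝ) ^ (b - 1)) 1 ≤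
              κ ^ (a - 1/2) * (1 - κ) ^ (b - 1) := mul_le_mul_of_nonneg_left hbnd hκpow
          have t2 : κ ^ (a - 1/2) * min ((1/2 : ℝ) ^ (b - 1)) 1 * (max (1 / τ ^ 2) 1)⁻¹ ≤
              κ ^ (a - 1/2) * (1 - κ) ^ (b - 1) * (1 / τ ^ 2 + (1 - 1 / τ ^ 2) * κ)⁻¹ :=
            mul_le_mul t1 hdinv (inv_pos.mpr hmax).le
              (mul_nonneg hκpow (Real.rpow_nonneg (by linarith) _))
          exact mul_le_mul t2 hexp (Real.exp_pos _).le
            (mul_nonneg (mul_nonneg hκpow (Real.rpow_nonneg (by linarith) _))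
              (inv_pos.mpr (dd_pos hτ h0.le h1.le)).le)
  have step1 : (∫ κ in Ioo (0:ℝ) (δ/2), ker (a - 1/2) b τ t κ) ≤
      ∫ κ in Ioo (0:ℝ) 1, ker (a - 1/2) b τ t κ :=
    setIntegral_mono_set (integrableOn_ker hq0 hb hτ t) (ker_nonneg_on hτ)
      (HasSubset.Subset.eventuallyLE hsub)
  refine le_trans (le_of_eq ?_) (le_trans step2 step1)
  rw [integral_const_mul]
  have hc : (0:ℝ) ≤ δ/2 := by linarith
  have : (∫ κ in Ioo (0:ℝ) (δ/2), κ ^ (a - 1/2)) = (δ/2) ^ (a - 1/2 + 1) / (a - 1/2 + 1) := by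
    rw [← integral_Ioc_eq_integral_Ioo, ← intervalIntegral.integral_of_le hc,
      integral_rpow (Or.inl hq0)]
    rw [Real.zero_rpow (ne_of_gt (by linarith : (0:ℝ) < a - 1/2 + 1))]
    ring
  rw [this]



lemma main_bound {a b τ : ℝ} (ha : 0 < a) (hb : 0 < b) (hτ : 0 < τ) {δ t y : ℝ}
    (hy : 0 ≤ y) (hδ0 : 0 < δ) (hδ : δ ≤ 1/2) (ht : 0 ≤ t) :
    y * ((∫ κ in Ioo (0:ℝ) 1, ker (a - 1/2 + 1) b τ t κ) /
        (∫ κ in Ioo (0:ℝ) 1, ker (a - 1/2) b τ t κ)) ≤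
      y * δ +
        ((∫ κ in Ioo (0:ℝ) 1, ker (a - 1/2) b τ 0 κ) * (a - 1/2 + 1) /
            (min ((1/2 : ℝ) ^ (b - 1)) 1 * (max (1 / τ ^ 2) 1)⁻¹)) *
          (y * (δ / 2) ^ (-(a - 1/2 + 1))) * Real.exp (-(δ * t) / 2) := by
  set q1 : ℝ := a - 1/2 + 1 with hq1
  set m : ℝ := min ((1/2 : ℝ) ^ (b - 1)) 1 * (max (1 / τ ^ 2) 1)⁻¹ with hm
  set F : ℝ := ∫ κ in Ioo (0:ℝ) 1, ker (a - 1/2) b τ 0 κ with hF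
  set I1 : ℝ := ∫ κ in Ioo (0:ℝ) 1, ker (a - 1/2 + 1) b τ t κ with hI1
  set I0 : ℝ := ∫ κ in Ioo (0:ℝ) 1, ker (a - 1/2) b τ t κ with hI0
  have hq1pos : 0 < q1 := by rw [hq1]; linarith
  have hmpos : 0 < m := by
    apply mul_pos (lt_min (Real.rpow_pos_of_pos (by norm_num) _) one_pos)
    exact inv_pos.mpr (lt_max_of_lt_right one_pos)
  set LB : ℝ := m * Real.exp (-(δ * t) / 2) * ((δ / 2) ^ q1 / q1) with hLB
  have hLBpos : 0 < LB := by
    rw [hLB]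
    exact mul_pos (mul_pos hmpos (Real.exp_pos _))
      (div_pos (Real.rpow_pos_of_pos (by linarith) _) hq1pos)
  have hI0LB : LB ≤ I0 := I0_ge ha hb hτ hδ0 hδ ht
  have hI0pos : 0 < I0 := lt_of_lt_of_le hLBpos hI0LB
  have hFnonneg : 0 ≤ F := by
    rw [hF]
    exact setIntegral_nonneg measurableSet_Ioo fun κ hκ => (ker_pos hτ hκ.1 hκ.2).le
  have hEF : (0:ℝ) ≤ Real.exp (-(δ * t)) * F := mul_nonneg (Real.exp_pos _).le hFnonneg
  have hstep1 : I1 / I0 ≤ δ + Real.exp (-(δ * t)) * F / I0 := by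
    rw [div_le_iff₀ hI0pos]
    have := I1_le ha hb hτ hδ0 hδ ht
    rw [← hI1, ← hI0, ← hF] at this
    calc I1 ≤ δ * I0 + Real.exp (-(δ * t)) * F := this
      _ = (δ + Real.exp (-(δ * t)) * F / I0) * I0 := by
          field_simp
  have hstep2 : Real.exp (-(δ * t)) * F / I0 ≤ Real.exp (-(δ * t)) * F / LB :=
    div_le_div_of_nonneg_left hEF hLBpos hI0LB
  have hr : I1 / I0 ≤ δ + Real.exp (-(δ * t)) * F / LB := le_trans hstep1 (by linarith)
  have hmain : y * (I1 / I0) ≤ y * (δ + Real.exp (-(δ * t)) * F / LB) :=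
    mul_le_mul_of_nonneg_left hr hy
  refine le_trans hmain (le_of_eq ?_)
  have hexp2 : Real.exp (-(δ * t)) = Real.exp (-(δ * t) / 2) * Real.exp (-(δ * t) / 2) := by
    rw [← Real.exp_add]
    ring_nf
  have hrpowneg : (δ / 2) ^ (-(q1)) = ((δ / 2) ^ q1)⁻¹ :=
    Real.rpow_neg (by linarith : (0:ℝ) ≤ δ/2) q1
  have hpowpos : (0:ℝ) < (δ / 2) ^ q1 := Real.rpow_pos_of_pos (by linarith) _
  rw [hLB, hexp2, hrpowneg]
  field_simp

lemma tendsto_U {a σ : ℝ} (ha : 0 < a) (hσ : 0 < σ) (s C : ℝ) :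
    Tendsto (fun y : ℝ => y * y ^ (-(3/2) : ℝ) +
      C * (y * (y ^ (-(3/2):ℝ) / 2) ^ (-(a - 1/2 + 1))) *
        Real.exp (-(y ^ (-(3/2):ℝ) * (s + y ^ 2 / (2 * σ ^ 2))) / 2)) atTop (nhds 0) := by
  set q1 : ℝ := a - 1/2 + 1 with hq1
  have hq1pos : 0 < q1 := by rw [hq1]; linarith
  set c : ℝ := 1 / (4 * σ ^ 2) with hc
  have hcpos : 0 < c := by rw [hc]; positivity
  set V : ℝ → ℝ := fun y =>
    y ^ (-(1/2) : ℝ) + C * (2:ℝ) ^ q1 * Real.exp (-(y ^ (-(3/2):ℝ) * s) / 2) *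
      (y ^ (1 + (3/2) * q1) * Real.exp (-c * y ^ ((1:ℝ)/2))) with hV
  have hVtendsto : Tendsto V atTop (nhds 0) := by
    have h1 : Tendsto (fun y : ℝ => y ^ (-(1/2) : ℝ)) atTop (nhds 0) :=
      tendsto_rpow_neg_atTop (by norm_num)
    have h32 : Tendsto (fun y : ℝ => y ^ (-(3/2) : ℝ)) atTop (nhds 0) :=
      tendsto_rpow_neg_atTop (by norm_num)
    have h2 : Tendsto (fun y : ℝ => Real.exp (-(y ^ (-(3/2):ℝ) * s) / 2)) atTop (nhds 1) := by
      have harg : Tendsto (fun y : ℝ => -(y ^ (-(3/2):ℝ) * s) / 2) atTop (nhds 0) := by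
        have := ((h32.mul_const s).neg).div_const 2
        simpa using this
      have := (Real.continuous_exp.tendsto 0).comp harg
      simpa [Function.comp_def] using this
    have h3 : Tendsto (fun y : ℝ =>
        y ^ (1 + (3/2) * q1) * Real.exp (-c * y ^ ((1:ℝ)/2))) atTop (nhds 0) := by
      have hx := tendsto_rpow_mul_exp_neg_mul_atTop_nhds_zero (2 * (1 + (3/2) * q1)) c hcpos
      have hy : Tendsto (fun y : ℝ => y ^ ((1:ℝ)/2)) atTop atTop :=
        tendsto_rpow_atTop (by norm_num)
      have hcomp := hx.comp hy
      refine hcomp.congr' ?_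
      filter_upwards [eventually_ge_atTop (0:ℝ)] with y hy0
      simp only [Function.comp_apply]
      rw [← Real.rpow_mul hy0, show (1:ℝ)/2 * (2 * (1 + (3/2) * q1)) = 1 + (3/2) * q1 by ring]
    have htot := h1.add (((tendsto_const_nhds (x := C * (2:ℝ) ^ q1)).mul h2).mul h3)
    simp only [zero_add, mul_one, mul_zero] at htot
    exact htot
  refine hVtendsto.congr' ?_
  filter_upwards [eventually_ge_atTop (1:ℝ)] with y hy1
  have hy0 : (0:ℝ) < y := by linarith
  have e1 : y ^ (-(1/2) : ℝ) = y * y ^ (-(3/2) : ℝ) := by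
    nth_rewrite 2 [← Real.rpow_one y]
    rw [← Real.rpow_add hy0]
    norm_num
  have e2 : (y ^ (-(3/2):ℝ) / 2) ^ (-(q1)) = y ^ ((3/2) * q1) * ((2:ℝ)) ^ q1 := by
    rw [Real.div_rpow (Real.rpow_nonneg hy0.le _) (by norm_num : (0:ℝ) ≤ 2)]
    rw [← Real.rpow_mul hy0.le, show -(3/2) * -q1 = (3/2) * q1 by ring]
    rw [Real.rpow_neg (by norm_num : (0:ℝ) ≤ 2)]
    field_simp
  have e3 : y * y ^ ((3/2) * q1) = y ^ (1 + (3/2) * q1) := by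
    nth_rewrite 1 [← Real.rpow_one y]
    rw [← Real.rpow_add hy0]
  have hy2 : y ^ (-(3/2):ℝ) * y ^ 2 = y ^ ((1:ℝ)/2) := by
    rw [← Real.rpow_natCast y 2, ← Real.rpow_add hy0]
    norm_num
  have e4 : Real.exp (-(y ^ (-(3/2):ℝ) * (s + y ^ 2 / (2 * σ ^ 2))) / 2) =
      Real.exp (-(y ^ (-(3/2):ℝ) * s) / 2) * Real.exp (-c * y ^ ((1:ℝ)/2)) := by
    rw [← Real.exp_add]
    congr 1
    rw [← hy2, hc]
    field_simp
    ring
  rw [hV]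
  simp only
  rw [e1, e2, e4, ← e3]
  ring

lemma I0_pos {a b τ : ℝ} (ha : 0 < a) (hb : 0 < b) (hτ : 0 < τ) {t : ℝ} (ht : 0 ≤ t) :
    0 < ∫ κ in Ioo (0:ℝ) 1, ker (a - 1/2) b τ t κ := by
  refine lt_of_lt_of_le ?_ (I0_ge ha hb hτ (by norm_num : (0:ℝ) < 1/2) le_rfl ht)
  have hmpos : 0 < min ((1/2 : ℝ) ^ (b - 1)) 1 * (max (1 / τ ^ 2) 1)⁻¹ := by
    apply mul_pos (lt_min (Real.rpow_pos_of_pos (by norm_num) _) one_pos)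
    exact inv_pos.mpr (lt_max_of_lt_right one_pos)
  exact mul_pos (mul_pos hmpos (Real.exp_pos _))
    (div_pos (Real.rpow_pos_of_pos (by norm_num) _) (by linarith))

end HBaux

theorem hb_tail_robustness (a b τ s σ : ℝ) (ha : 0 < a) (hb : 0 < b) (hτ : 0 < τ)
    (hσ : 0 < σ) :
    Tendsto (fun y : ℝ => y * (postInt a b τ s σ 1 y / postInt a b τ s σ 0 y))
        atTop (nhds 0) ∧
      Tendsto
        (fun y : ℝ => (1 - postInt a b τ s σ 1 y / postInt a b τ s σ 0 y) * y - y)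
        atTop (nhds 0) := by
  have httop : Tendsto (fun y : ℝ => s + y ^ 2 / (2 * σ ^ 2)) atTop atTop := by
    apply tendsto_atTop_add_const_left
    apply Tendsto.atTop_div_const (by positivity : (0:ℝ) < 2 * σ ^ 2)
    exact tendsto_pow_atTop two_ne_zero
  set C : ℝ := (∫ κ in Ioo (0:ℝ) 1, HBaux.ker (a - 1/2) b τ 0 κ) * (a - 1/2 + 1) /
      (min ((1/2 : ℝ) ^ (b - 1)) 1 * (max (1 / τ ^ 2) 1)⁻¹) with hC
  set U : ℝ → ℝ := fun y => y * y ^ (-(3/2) : ℝ) +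
      C * (y * (y ^ (-(3/2):ℝ) / 2) ^ (-(a - 1/2 + 1))) *
        Real.exp (-(y ^ (-(3/2):ℝ) * (s + y ^ 2 / (2 * σ ^ 2))) / 2) with hU
  have hpost1 : ∀ y : ℝ, postInt a b τ s σ 1 y =
      ∫ κ in Ioo (0:ℝ) 1, HBaux.ker (a - 1/2 + 1) b τ (s + y ^ 2 / (2 * σ ^ 2)) κ := fun y => rfl
  have hpost0 : ∀ y : ℝ, postInt a b τ s σ 0 y =
      ∫ κ in Ioo (0:ℝ) 1, HBaux.ker (a - 1/2) b τ (s + y ^ 2 / (2 * σ ^ 2)) κ := by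
    intro y
    unfold postInt HBaux.ker
    norm_num
  have hdelta : ∀ y : ℝ, 4 ≤ y → 0 < y ^ (-(3/2) : ℝ) ∧ y ^ (-(3/2) : ℝ) ≤ 1/2 := by
    intro y hy4
    have hy0 : (0:ℝ) < y := by linarith
    refine ⟨Real.rpow_pos_of_pos hy0 _, ?_⟩
    have h1 : y ^ (-(3/2) : ℝ) ≤ y ^ (-1 : ℝ) :=
      Real.rpow_le_rpow_of_exponent_le (by linarith) (by norm_num)
    have h2 : y ^ (-1 : ℝ) = y⁻¹ := Real.rpow_neg_one y
    have h3 : y⁻¹ ≤ (4:ℝ)⁻¹ := by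
      apply inv_anti₀ (by norm_num) hy4
    rw [h2] at h1
    calc y ^ (-(3/2) : ℝ) ≤ y⁻¹ := h1
      _ ≤ (4:ℝ)⁻¹ := h3
      _ ≤ 1/2 := by norm_num
  have hup : ∀ᶠ y in atTop,
      y * (postInt a b τ s σ 1 y / postInt a b τ s σ 0 y) ≤ U y := by
    filter_upwards [eventually_ge_atTop (4:ℝ), httop.eventually_ge_atTop 0] with y hy4 hty
    obtain ⟨hδ0, hδle⟩ := hdelta y hy4
    rw [hpost1, hpost0, hU]
    exact HBaux.main_bound ha hb hτ (by linarith) hδ0 hδle hty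
  have hlo : ∀ᶠ y in atTop,
      0 ≤ y * (postInt a b τ s σ 1 y / postInt a b τ s σ 0 y) := by
    filter_upwards [eventually_ge_atTop (4:ℝ), httop.eventually_ge_atTop 0] with y hy4 hty
    have hI1 : 0 ≤ postInt a b τ s σ 1 y := by
      rw [hpost1]
      exact setIntegral_nonneg measurableSet_Ioo fun κ hκ => (HBaux.ker_pos hτ hκ.1 hκ.2).le
    have hI0 : 0 < postInt a b τ s σ 0 y := by
      rw [hpost0]
      exact HBaux.I0_pos ha hb hτ hty
    have : 0 ≤ postInt a b τ s σ 1 y / postInt a b τ s σ 0 y := div_nonneg hI1 hI0.le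
    exact mul_nonneg (by linarith) this
  have hUt : Tendsto U atTop (nhds 0) := by
    rw [hU]
    exact HBaux.tendsto_U ha hσ s C
  have h1 : Tendsto (fun y : ℝ => y * (postInt a b τ s σ 1 y / postInt a b τ s σ 0 y))
      atTop (nhds 0) :=
    tendsto_of_tendsto_of_tendsto_of_le_of_le' tendsto_const_nhds hUt hlo hup
  refine ⟨h1, ?_⟩
  have h2 := h1.neg
  rw [neg_zero] at h2
  exact h2.congr fun y => by ring
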